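/- Let T > 0, t ∈ [0, T], and let n, m ≥ 1 be integers. Then the integral over s ∈ [0, T], (x₁,…,x_{n−1}) ∈ [0, T]^{n−1} and (y₁,…,y_{m−1}) ∈ [0, T]^{m−1} of the indicator of the event {s ≤ x_{n−1} ≤ ⋯ ≤ x₁ ≤ t and s ≤ y_{m−1} ≤ ⋯ ≤ y₁ ≤ t} equals binom(n+m−2, n−1) · t^{n+m−1}/(n+m−1)!. -/

import Mathlib

open MeasureTheory

def chainSet (a : ℕ) (s t : ℝ) : Set (Fin a → ℝ) :=
  {x | (∀ i j : Fin a, i ≤ j → x j ≤ x i) ∧ ∀ i : Fin a, s ≤ x i ∧ x i ≤ t}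

lemma isClosed_gen {α : Type*} [TopologicalSpace α] {k : ℕ} (g : α → Fin k → ℝ)
    (hg : Continuous g) (lo hi : α → ℝ) (hlo : Continuous lo) (hhi : Continuous hi) :
    IsClosed {q : α | (∀ i j : Fin k, i ≤ j → g q j ≤ g q i) ∧
      ∀ i, lo q ≤ g q i ∧ g q i ≤ hi q} := by
  have h1 : IsClosed {q : α | ∀ i j : Fin k, i ≤ j → g q j ≤ g q i} := by
    have : {q : α | ∀ i j : Fin k, i ≤ j → g q j ≤ g q i}
        = ⋂ (i : Fin k) (j : Fin k), {q | i ≤ j → g q j ≤ g q i} := by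
      ext q; simp [Set.mem_iInter]
    rw [this]
    refine isClosed_iInter fun i => isClosed_iInter fun j => ?_
    by_cases h : i ≤ j
    · have : {q : α | i ≤ j → g q j ≤ g q i} = {q | g q j ≤ g q i} := by
        ext q; simp [h]
      rw [this]
      exact isClosed_le ((continuous_apply j).comp hg) ((continuous_apply i).comp hg)
    · have : {q : α | i ≤ j → g q j ≤ g q i} = Set.univ := by
        ext q; simp [h]
      rw [this]; exact isClosed_univ
  have h2 : IsClosed {q : α | ∀ i, lo q ≤ g q i ∧ g q i ≤ hi q} := by
    have : {q : α | ∀ i, lo q ≤ g q i ∧ g q i ≤ hi q}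
        = ⋂ (i : Fin k), ({q | lo q ≤ g q i} ∩ {q | g q i ≤ hi q}) := by
      ext q; simp [Set.mem_iInter, forall_and]
    rw [this]
    refine isClosed_iInter fun i => IsClosed.inter ?_ ?_
    · exact isClosed_le hlo ((continuous_apply i).comp hg)
    · exact isClosed_le ((continuous_apply i).comp hg) hhi
  exact h1.inter h2

lemma isClosed_chainSet (a : ℕ) (s t : ℝ) : IsClosed (chainSet a s t) :=
  isClosed_gen (fun x => x) continuous_id (fun _ => s) (fun _ => t)
    continuous_const continuous_const

lemma int1 (k : ℕ) (s t : ℝ) (h : s ≤ t) :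
    ∫ x in Set.Icc s t, (x - s) ^ k = (t - s) ^ (k + 1) / (k + 1) := by
  rw [integral_Icc_eq_integral_Ioc, ← intervalIntegral.integral_of_le h]
  rw [intervalIntegral.integral_comp_sub_right (fun u => u ^ k) s]
  simp [integral_pow, zero_pow]

lemma int2 (k : ℕ) (s t : ℝ) (h : s ≤ t) :
    ∫ x in Set.Icc s t, (t - x) ^ k = (t - s) ^ (k + 1) / (k + 1) := by
  rw [integral_Icc_eq_integral_Ioc, ← intervalIntegral.integral_of_le h]
  rw [intervalIntegral.integral_comp_sub_left (fun u => u ^ k) t]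
  simp [integral_pow, zero_pow]

lemma chain_vol (a : ℕ) : ∀ (s t : ℝ), s ≤ t →
    volume (chainSet a s t) = ENNReal.ofReal ((t - s) ^ a / a.factorial) := by
  induction a with
  | zero =>
    intro s t _
    have h : chainSet 0 s t = Set.univ := by
      ext x; simp [chainSet, Fin.elim0]
    rw [h]
    simp [volume_pi, Measure.pi_univ]
  | succ a ih =>
    intro s t hst
    set E : Set (ℝ × (Fin a → ℝ)) :=
      {p | (∀ i j : Fin a, i ≤ j → p.2 j ≤ p.2 i) ∧ ∀ i, s ≤ p.2 i ∧ p.2 i ≤ p.1}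
        ∩ {p | s ≤ p.1} ∩ {p | p.1 ≤ t} with hE
    have hEclosed : IsClosed E :=
      ((isClosed_gen (fun p => p.2) continuous_snd (fun _ => s) (fun p => p.1)
        continuous_const continuous_fst).inter
        (isClosed_le continuous_const continuous_fst)).inter
        (isClosed_le continuous_fst continuous_const)
    have hEm : MeasurableSet E := hEclosed.measurableSet
    have hmp := measurePreserving_piFinSuccAbove (fun _ : Fin (a + 1) => (volume : Measure ℝ)) 0
    have hpre : chainSet (a + 1) s t = (MeasurableEquiv.piFinSuccAbove (fun _ => ℝ) 0) ⁻¹' E := by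
      ext x
      simp only [Set.mem_preimage, MeasurableEquiv.piFinSuccAbove_apply, hE,
        Set.mem_inter_iff, Set.mem_setOf_eq, chainSet]
      constructor
      · rintro ⟨hchain, hbnd⟩
        refine ⟨⟨⟨fun i j hij => hchain _ _ (by simpa using hij), fun i =>
          ⟨(hbnd _).1, hchain 0 _ (Fin.zero_le _)⟩⟩, (hbnd 0).1⟩, (hbnd 0).2⟩
      · rintro ⟨⟨⟨hchain, hbnd⟩, hs0⟩, h0t⟩
        constructor
        · intro i j hij
          induction i using Fin.cases with
          | zero =>
            induction j using Fin.cases with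
            | zero => exact le_refl _
            | succ j' => exact (hbnd j').2
          | succ i' =>
            induction j using Fin.cases with
            | zero => exact (Fin.succ_ne_zero i' (Fin.le_zero_iff.mp hij)).elim
            | succ j' => exact hchain i' j' (by simpa using hij)
        · intro i
          induction i using Fin.cases with
          | zero => exact ⟨hs0, h0t⟩
          | succ i' => exact ⟨(hbnd i').1, le_trans (hbnd i').2 h0t⟩
    have hvol : volume (chainSet (a + 1) s t)
        = ((volume : Measure ℝ).prod (Measure.pi fun _ : Fin a => (volume : Measure ℝ))) E := by
      rw [hpre, volume_pi]
      exact hmp.measure_preimage hEm.nullMeasurableSet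
    rw [hvol, Measure.prod_apply hEm]
    have hslice : ∀ x0 : ℝ, (Measure.pi fun _ : Fin a => (volume : Measure ℝ))
        (Prod.mk x0 ⁻¹' E)
        = Set.indicator (Set.Icc s t)
            (fun u => ENNReal.ofReal ((u - s) ^ a / a.factorial)) x0 := by
      intro x0
      by_cases h : x0 ∈ Set.Icc s t
      · rw [Set.indicator_of_mem h]
        have : Prod.mk x0 ⁻¹' E = chainSet a s x0 := by
          ext r; simp [hE, chainSet, h.1, h.2, and_assoc]
        rw [this, ← volume_pi, ih s x0 h.1]
      · rw [Set.indicator_of_notMem h]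
        have : Prod.mk x0 ⁻¹' E = ∅ := by
          ext r
          simp only [Set.mem_preimage, hE, Set.mem_inter_iff, Set.mem_setOf_eq,
            Set.mem_empty_iff_false, iff_false]
          rintro ⟨⟨-, h1⟩, h2⟩
          exact h ⟨h1, h2⟩
        simp [this]
    simp only [hslice]
    rw [lintegral_indicator measurableSet_Icc]
    have hf : Continuous (fun u : ℝ => (u - s) ^ a / a.factorial) :=
      ((continuous_id.sub continuous_const).pow a).div_const _
    have hnn : 0 ≤ᵐ[volume.restrict (Set.Icc s t)] fun u : ℝ => (u - s) ^ a / a.factorial :=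
      (ae_restrict_iff' measurableSet_Icc).2 (Filter.Eventually.of_forall fun x hx => by
        have : (0:ℝ) ≤ x - s := by linarith [hx.1]
        positivity)
    rw [← ofReal_integral_eq_lintegral_ofReal (hf.integrableOn_Icc) hnn]
    rw [MeasureTheory.integral_div, int1 a s t hst]
    congr 1
    rw [Nat.factorial_succ]
    push_cast
    field_simp

/-- For `T > 0`, `t ∈ [0,T]` and integers `n, m ≥ 1`, the Lebesgue
integral over `s ∈ [0,T]`, `(x₁,…,x_{n-1}) ∈ [0,T]^{n-1}`, `(y₁,…,y_{m-1}) ∈ [0,T]^{m-1}`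
of the indicator of the event `{s ≤ x_{n-1} ≤ ⋯ ≤ x₁ ≤ t and s ≤ y_{m-1} ≤ ⋯ ≤ y₁ ≤ t}`
(for `n = 1`, resp. `m = 1`, the corresponding chain condition reads `s ≤ t`)
equals `binom(n+m-2, n-1) · t^{n+m-1}/(n+m-1)!`. -/
theorem stmt13 (T : ℝ) (hT : 0 < T) (t : ℝ) (ht : t ∈ Set.Icc (0 : ℝ) T)
    (n m : ℕ) (hn : 1 ≤ n) (hm : 1 ≤ m) :
    (∫ p in (Set.Icc (0 : ℝ) T) ×ˢ
        ((Set.univ.pi fun _ : Fin (n - 1) => Set.Icc (0 : ℝ) T) ×ˢ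
          (Set.univ.pi fun _ : Fin (m - 1) => Set.Icc (0 : ℝ) T)),
      Set.indicator
        {q : ℝ × ((Fin (n - 1) → ℝ) × (Fin (m - 1) → ℝ)) |
          q.1 ≤ t ∧
          (∀ i j : Fin (n - 1), i ≤ j → q.2.1 j ≤ q.2.1 i) ∧
          (∀ i : Fin (n - 1), q.1 ≤ q.2.1 i ∧ q.2.1 i ≤ t) ∧
          (∀ i j : Fin (m - 1), i ≤ j → q.2.2 j ≤ q.2.2 i) ∧
          (∀ i : Fin (m - 1), q.1 ≤ q.2.2 i ∧ q.2.2 i ≤ t)}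
        (fun _ => (1 : ℝ)) p)
      = (Nat.choose (n + m - 2) (n - 1) : ℝ) * t ^ (n + m - 1) /
          (Nat.factorial (n + m - 1) : ℝ) := by
  obtain ⟨a, rfl⟩ : ∃ a, n = a + 1 := ⟨n - 1, by omega⟩
  obtain ⟨b, rfl⟩ : ∃ b, m = b + 1 := ⟨m - 1, by omega⟩
  obtain ⟨ht0, htT⟩ := ht
  show (∫ p in (Set.Icc (0 : ℝ) T) ×ˢ
        ((Set.univ.pi fun _ : Fin a => Set.Icc (0 : ℝ) T) ×ˢ
          (Set.univ.pi fun _ : Fin b => Set.Icc (0 : ℝ) T)),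
      Set.indicator
        {q : ℝ × ((Fin a → ℝ) × (Fin b → ℝ)) |
          q.1 ≤ t ∧
          (∀ i j : Fin a, i ≤ j → q.2.1 j ≤ q.2.1 i) ∧
          (∀ i : Fin a, q.1 ≤ q.2.1 i ∧ q.2.1 i ≤ t) ∧
          (∀ i j : Fin b, i ≤ j → q.2.2 j ≤ q.2.2 i) ∧
          (∀ i : Fin b, q.1 ≤ q.2.2 i ∧ q.2.2 i ≤ t)}
        (fun _ => (1 : ℝ)) p)
      = (Nat.choose (a + 1 + (b + 1) - 2) a : ℝ) * t ^ (a + 1 + (b + 1) - 1) /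
          (Nat.factorial (a + 1 + (b + 1) - 1) : ℝ)
  rw [show a + 1 + (b + 1) - 2 = a + b from by omega,
    show a + 1 + (b + 1) - 1 = a + b + 1 from by omega]
  set S : Set (ℝ × ((Fin a → ℝ) × (Fin b → ℝ))) :=
    {q | q.1 ≤ t ∧
      (∀ i j : Fin a, i ≤ j → q.2.1 j ≤ q.2.1 i) ∧
      (∀ i : Fin a, q.1 ≤ q.2.1 i ∧ q.2.1 i ≤ t) ∧
      (∀ i j : Fin b, i ≤ j → q.2.2 j ≤ q.2.2 i) ∧
      (∀ i : Fin b, q.1 ≤ q.2.2 i ∧ q.2.2 i ≤ t)} with hSdef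
  have hSclosed : IsClosed S := by
    have : S = {q : ℝ × ((Fin a → ℝ) × (Fin b → ℝ)) | q.1 ≤ t} ∩
        ({q | (∀ i j : Fin a, i ≤ j → q.2.1 j ≤ q.2.1 i) ∧
            ∀ i, q.1 ≤ q.2.1 i ∧ q.2.1 i ≤ t} ∩
         {q | (∀ i j : Fin b, i ≤ j → q.2.2 j ≤ q.2.2 i) ∧
            ∀ i, q.1 ≤ q.2.2 i ∧ q.2.2 i ≤ t}) := by
      ext q
      simp only [hSdef, Set.mem_inter_iff, Set.mem_setOf_eq]
      tauto
    rw [this]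
    exact (isClosed_le continuous_fst continuous_const).inter
      ((isClosed_gen (α := ℝ × ((Fin a → ℝ) × (Fin b → ℝ))) (fun q => q.2.1) continuous_snd.fst (fun q => q.1) (fun _ => t)
          continuous_fst continuous_const).inter
       (isClosed_gen (α := ℝ × ((Fin a → ℝ) × (Fin b → ℝ))) (fun q => q.2.2) continuous_snd.snd (fun q => q.1) (fun _ => t)
          continuous_fst continuous_const))
  rw [setIntegral_indicator hSclosed.measurableSet, setIntegral_const, smul_eq_mul, mul_one]
  set D : Set (ℝ × ((Fin a → ℝ) × (Fin b → ℝ))) :=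
    {p | (0 ≤ p.1 ∧ p.1 ≤ t) ∧ p.2.1 ∈ chainSet a p.1 t ∧ p.2.2 ∈ chainSet b p.1 t} with hDdef
  have hRS : (Set.Icc (0 : ℝ) T) ×ˢ
      ((Set.univ.pi fun _ : Fin a => Set.Icc (0 : ℝ) T) ×ˢ
        (Set.univ.pi fun _ : Fin b => Set.Icc (0 : ℝ) T)) ∩ S = D := by
    ext p
    simp only [hSdef, hDdef, Set.mem_inter_iff, Set.mem_prod, Set.mem_pi, Set.mem_univ,
      Set.mem_Icc, Set.mem_setOf_eq, forall_true_left, chainSet, true_implies]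
    constructor
    · rintro ⟨⟨⟨h0, _⟩, _, _⟩, h1, h2, h3, h4, h5⟩
      exact ⟨⟨h0, h1⟩, ⟨h2, h3⟩, ⟨h4, h5⟩⟩
    · rintro ⟨⟨h0, h1⟩, ⟨h2, h3⟩, ⟨h4, h5⟩⟩
      refine ⟨⟨⟨h0, le_trans h1 htT⟩, fun i => ⟨le_trans h0 (h3 i).1,
        le_trans (h3 i).2 htT⟩, fun i => ⟨le_trans h0 (h5 i).1, le_trans (h5 i).2 htT⟩⟩,
        h1, h2, h3, h4, h5⟩
  rw [hRS]
  have hDclosed : IsClosed D := by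
    have : D = ({p : ℝ × ((Fin a → ℝ) × (Fin b → ℝ)) | 0 ≤ p.1} ∩ {p | p.1 ≤ t}) ∩
        ({p | (∀ i j : Fin a, i ≤ j → p.2.1 j ≤ p.2.1 i) ∧
            ∀ i, p.1 ≤ p.2.1 i ∧ p.2.1 i ≤ t} ∩
         {p | (∀ i j : Fin b, i ≤ j → p.2.2 j ≤ p.2.2 i) ∧
            ∀ i, p.1 ≤ p.2.2 i ∧ p.2.2 i ≤ t}) := by
      ext p
      simp only [hDdef, Set.mem_inter_iff, Set.mem_setOf_eq, chainSet]
      try tauto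
    rw [this]
    exact ((isClosed_le continuous_const continuous_fst).inter
        (isClosed_le continuous_fst continuous_const)).inter
      ((isClosed_gen (α := ℝ × ((Fin a → ℝ) × (Fin b → ℝ))) (fun q => q.2.1) continuous_snd.fst (fun q => q.1) (fun _ => t)
          continuous_fst continuous_const).inter
       (isClosed_gen (α := ℝ × ((Fin a → ℝ) × (Fin b → ℝ))) (fun q => q.2.2) continuous_snd.snd (fun q => q.1) (fun _ => t)
          continuous_fst continuous_const))
  have hvolD : volume D = ENNReal.ofReal
      (t ^ (a + b + 1) / (a + b + 1) / (a.factorial * b.factorial)) := by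
    rw [Measure.volume_eq_prod, Measure.prod_apply hDclosed.measurableSet]
    have hslice : ∀ s : ℝ, (volume : Measure ((Fin a → ℝ) × (Fin b → ℝ)))
        (Prod.mk s ⁻¹' D)
        = Set.indicator (Set.Icc 0 t)
            (fun s => ENNReal.ofReal ((t - s) ^ a / a.factorial * ((t - s) ^ b / b.factorial)))
            s := by
      intro s
      by_cases h : s ∈ Set.Icc (0 : ℝ) t
      · rw [Set.indicator_of_mem h]
        have hpre : Prod.mk s ⁻¹' D = chainSet a s t ×ˢ chainSet b s t := by
          ext r
          simp [hDdef, Set.mem_prod, h.1, h.2]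
        rw [hpre, Measure.volume_eq_prod, Measure.prod_prod, chain_vol a s t h.2,
          chain_vol b s t h.2, ← ENNReal.ofReal_mul (by have h2 : (0:ℝ) ≤ t - s := sub_nonneg.mpr h.2; positivity)]
      · rw [Set.indicator_of_notMem h]
        have hpre : Prod.mk s ⁻¹' D = ∅ := by
          ext r
          simp only [Set.mem_preimage, hDdef, Set.mem_setOf_eq, Set.mem_empty_iff_false,
            iff_false]
          rintro ⟨⟨h0, h1⟩, -⟩
          exact h ⟨h0, h1⟩
        simp [hpre]
    simp only [hslice]
    rw [lintegral_indicator measurableSet_Icc]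
    have hf : Continuous (fun s : ℝ =>
        (t - s) ^ a / a.factorial * ((t - s) ^ b / b.factorial)) := by
      apply Continuous.mul
      · exact ((continuous_const.sub continuous_id).pow a).div_const _
      · exact ((continuous_const.sub continuous_id).pow b).div_const _
    have hnn : 0 ≤ᵐ[volume.restrict (Set.Icc (0:ℝ) t)] fun s : ℝ =>
        (t - s) ^ a / a.factorial * ((t - s) ^ b / b.factorial) :=
      (ae_restrict_iff' measurableSet_Icc).2 (Filter.Eventually.of_forall fun x hx => by
        have : (0:ℝ) ≤ t - x := by linarith [hx.2]
        positivity)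
    rw [← ofReal_integral_eq_lintegral_ofReal hf.integrableOn_Icc hnn]
    congr 1
    have heq : (fun s : ℝ => (t - s) ^ a / a.factorial * ((t - s) ^ b / b.factorial))
        = fun s : ℝ => (t - s) ^ (a + b) / ((a.factorial : ℝ) * b.factorial) := by
      funext s
      rw [pow_add]
      ring
    rw [heq, MeasureTheory.integral_div, int2 (a + b) 0 t ht0, sub_zero]
    push_cast
    ring
  rw [measureReal_def, hvolD, ENNReal.toReal_ofReal (by positivity)]
  have key : ((a + b).choose a : ℝ) * a.factorial * b.factorial = (a + b).factorial := by
    have h := Nat.choose_mul_factorial_mul_factorial (Nat.le_add_right a b)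
    rw [Nat.add_sub_cancel_left] at h
    exact_mod_cast h
  have hfa : (a.factorial : ℝ) ≠ 0 := by positivity
  have hfb : (b.factorial : ℝ) ≠ 0 := by positivity
  have hab : ((a : ℝ) + b + 1) ≠ 0 := by positivity
  rw [Nat.factorial_succ]
  push_cast
  field_simp
  linear_combination (-(t * t ^ a * t ^ b)) * key
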